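/- Front-door adjustment: Let U_H, U_T, U_M, U_Y be jointly independent random variables taking values in finite types, and define H := h(U_H), T := f_T(H, U_T), M := f_M(T, U_M), Y := f_Y(M, H, U_Y) (so the hidden variable H confounds T and Y, and M mediates the entire effect of T on Y with M independent of H given T). Fix a value t of T and define the intervened variables M' := f_M(t, U_M), Y' := f_Y(M', H, U_Y) (modeling do(T := t)). Assume P(T = t', M = m) > 0 for all values t', m. Then for every y, P(Y' = y) = Σ_m P(M = m ∣ T = t) · Σ_{t'} P(T = t') · P(Y = y ∣ M = m, T = t'). -/

import Mathlib

open MeasureTheory ProbabilityTheory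

section Aux

lemma fd_key {Ω : Type*} [MeasurableSpace Ω] (μ : Measure Ω) {β : Type*} [Fintype β]
    [MeasurableSpace β] [MeasurableSingletonClass β] (V : Ω → β) (hV : Measurable V)
    (S : Set β) [DecidablePred (· ∈ S)] :
    μ (V ⁻¹' S) = ∑ b : β, if b ∈ S then μ (V ⁻¹' {b}) else 0 := by
  classical
  have h1 : V ⁻¹' S = V ⁻¹' (↑(Finset.univ.filter (· ∈ S))) := by
    ext b; simp
  rw [h1, ← sum_measure_preimage_singleton _ (fun b _ => hV (measurableSet_singleton b)),
    Finset.sum_filter]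

-- sum over last variable, condition not depending on it
lemma fd_L3 {β : Type*} [Fintype β] (p : β → ENNReal) (hp : ∑ b, p b = 1)
    (P : Prop) [Decidable P] (a : ENNReal) :
    ∑ b, (if P then a * p b else 0) = if P then a else 0 := by
  by_cases hP : P <;> simp [hP, ← Finset.mul_sum, hp]

-- sum where condition splits as c ∧ d b
lemma fd_L4 {β : Type*} [Fintype β] (p : β → ENNReal)
    (c : Prop) [Decidable c] (d : β → Prop) [DecidablePred d] (a : ENNReal) :
    ∑ b, (if c ∧ d b then a * p b else 0)
      = if c then a * ∑ b, (if d b then p b else 0) else 0 := by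
  by_cases hc : c <;>
    simp [hc, Finset.mul_sum, mul_ite, mul_zero]

-- like L4 but with a trailing factor r
lemma fd_L6 {β : Type*} [Fintype β] (p : β → ENNReal)
    (c : Prop) [Decidable c] (d : β → Prop) [DecidablePred d] (x r : ENNReal) :
    ∑ b, (if c ∧ d b then (x * p b) * r else 0)
      = if c then (x * ∑ b, (if d b then p b else 0)) * r else 0 := by
  by_cases hc : c <;>
    simp [hc, Finset.mul_sum, Finset.sum_mul, mul_ite, ite_mul, mul_zero, zero_mul]

-- pull constant out of conditional sum
lemma fd_L1 {β : Type*} [Fintype β] (p : β → ENNReal)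
    (P : β → Prop) [DecidablePred P] (a : ENNReal) :
    ∑ b, (if P b then a * p b else 0) = a * ∑ b, (if P b then p b else 0) := by
  simp [Finset.mul_sum, mul_ite, mul_zero]

lemma fd_cancel {a q g : ENNReal} (ha0 : a ≠ 0) (hat : a ≠ ⊤) (hq0 : q ≠ 0) (hqt : q ≠ ⊤) :
    a * ((a * q)⁻¹ * (q * g)) = g := by
  have h1 : a * ((a * q)⁻¹ * (q * g)) = (a * a⁻¹) * ((q⁻¹ * q) * g) := by
    rw [ENNReal.mul_inv (Or.inl ha0) (Or.inl hat)]; ring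
  rw [h1, ENNReal.mul_inv_cancel ha0 hat, ENNReal.inv_mul_cancel hq0 hqt, one_mul, one_mul]

lemma fd_ite_irrel {α : Sort*} {c d : Prop} (i1 : Decidable c) (i2 : Decidable d)
    (h : c = d) (a b : α) : @ite α c i1 a b = @ite α d i2 a b := by
  subst h; congr

end Aux

theorem front_door_adjustment
    {Ω : Type*} [MeasurableSpace Ω] (μ : Measure Ω) [IsProbabilityMeasure μ]
    {BH BT BM BY AH AT AM AY : Type*}
    [Fintype BH] [Fintype BT] [Fintype BM] [Fintype BY]
    [Fintype AH] [Fintype AT] [Fintype AM] [Fintype AY]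
    [MeasurableSpace BH] [MeasurableSingletonClass BH]
    [MeasurableSpace BT] [MeasurableSingletonClass BT]
    [MeasurableSpace BM] [MeasurableSingletonClass BM]
    [MeasurableSpace BY] [MeasurableSingletonClass BY]
    (UH : Ω → BH) (UT : Ω → BT) (UM : Ω → BM) (UY : Ω → BY)
    (hUH : Measurable UH) (hUT : Measurable UT) (hUM : Measurable UM) (hUY : Measurable UY)
    -- joint independence of the noise variables
    (hindep : ∀ (bH : BH) (bT : BT) (bM : BM) (bY : BY),
      μ {ω | UH ω = bH ∧ UT ω = bT ∧ UM ω = bM ∧ UY ω = bY}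
        = μ {ω | UH ω = bH} * μ {ω | UT ω = bT} * μ {ω | UM ω = bM} * μ {ω | UY ω = bY})
    (h : BH → AH) (fT : AH → BT → AT) (fM : AT → BM → AM) (fY : AM → AH → BY → AY)
    (H : Ω → AH) (T : Ω → AT) (M : Ω → AM) (Y : Ω → AY)
    (hH : ∀ ω, H ω = h (UH ω)) (hT : ∀ ω, T ω = fT (H ω) (UT ω))
    (hM : ∀ ω, M ω = fM (T ω) (UM ω)) (hY : ∀ ω, Y ω = fY (M ω) (H ω) (UY ω))
    -- the intervention do(T := t)
    (t : AT) (M' : Ω → AM) (Y' : Ω → AY)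
    (hM' : ∀ ω, M' ω = fM t (UM ω)) (hY' : ∀ ω, Y' ω = fY (M' ω) (H ω) (UY ω))
    -- positivity
    (hpos : ∀ (t' : AT) (m : AM), μ {ω | T ω = t' ∧ M ω = m} ≠ 0) :
    ∀ y : AY,
      μ {ω | Y' ω = y}
        = ∑ m : AM, μ[|{ω | T ω = t}] {ω | M ω = m} *
            ∑ t' : AT, μ {ω | T ω = t'} *
              μ[|{ω | M ω = m ∧ T ω = t'}] {ω | Y ω = y} := by
  classical
  intro y
  set pH : BH → ENNReal := fun b => μ {ω | UH ω = b} with hpHdef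
  set pT : BT → ENNReal := fun b => μ {ω | UT ω = b} with hpTdef
  set pM : BM → ENNReal := fun b => μ {ω | UM ω = b} with hpMdef
  set pY : BY → ENNReal := fun b => μ {ω | UY ω = b} with hpYdef
  set V : Ω → BH × BT × BM × BY := fun ω => (UH ω, UT ω, UM ω, UY ω) with hVdef
  have hV : Measurable V :=
    (hUH.prodMk (hUT.prodMk (hUM.prodMk hUY)))
  -- totals
  have hpM1 : ∑ b, pM b = 1 := by
    have := sum_measure_preimage_singleton (μ := μ) (f := UM) Finset.univ
      (fun b _ => hUM (measurableSet_singleton b))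
    simp at this; exact this
  have hpY1 : ∑ b, pY b = 1 := by
    have := sum_measure_preimage_singleton (μ := μ) (f := UY) Finset.univ
      (fun b _ => hUY (measurableSet_singleton b))
    simp at this; exact this
  -- atoms
  have hatom : ∀ v : BH × BT × BM × BY,
      μ (V ⁻¹' {v}) = pH v.1 * pT v.2.1 * pM v.2.2.1 * pY v.2.2.2 := by
    rintro ⟨b1, b2, b3, b4⟩
    rw [← hindep]
    congr 1
    ext ω
    simp [hVdef, Prod.ext_iff, and_assoc]
  -- master sum formula
  have sumS : ∀ (S : Set (BH × BT × BM × BY)),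
      μ (V ⁻¹' S) = ∑ b1, ∑ b2, ∑ b3, ∑ b4,
        if (b1, b2, b3, b4) ∈ S then pH b1 * pT b2 * pM b3 * pY b4 else 0 := by
    intro S
    rw [fd_key μ V hV S]
    rw [Fintype.sum_prod_type]
    refine Finset.sum_congr rfl fun b1 _ => ?_
    rw [Fintype.sum_prod_type]
    refine Finset.sum_congr rfl fun b2 _ => ?_
    rw [Fintype.sum_prod_type]
    refine Finset.sum_congr rfl fun b3 _ => ?_
    refine Finset.sum_congr rfl fun b4 _ => ?_
    by_cases hv : (b1, b2, b3, b4) ∈ S <;> simp [hv, hatom]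
  have hmeasV : ∀ (S : Set (BH × BT × BM × BY)), MeasurableSet (V ⁻¹' S) :=
    fun S => hV (S.toFinite.measurableSet)
  -- event descriptions
  have eT : ∀ t' : AT, {ω | T ω = t'} = V ⁻¹' {v | fT (h v.1) v.2.1 = t'} := by
    intro t'; ext ω; simp [hVdef, hT, hH]
  have eMT : ∀ (m : AM) (t' : AT), {ω | M ω = m ∧ T ω = t'}
      = V ⁻¹' {v | fT (h v.1) v.2.1 = t' ∧ fM t' v.2.2.1 = m} := by
    intro m t'; ext ω
    simp only [Set.mem_setOf_eq, Set.mem_preimage, hVdef, hM, hT, hH]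
    constructor
    · rintro ⟨h1, h2⟩; subst h2; exact ⟨rfl, h1⟩
    · rintro ⟨h1, h2⟩; subst h1; exact ⟨h2, rfl⟩
  have eMTY : ∀ (m : AM) (t' : AT), {ω | M ω = m ∧ T ω = t'} ∩ {ω | Y ω = y}
      = V ⁻¹' {v | (fT (h v.1) v.2.1 = t' ∧ fM t' v.2.2.1 = m) ∧ fY m (h v.1) v.2.2.2 = y} := by
    intro m t'; ext ω
    simp only [Set.mem_inter_iff, Set.mem_setOf_eq, Set.mem_preimage, hVdef, hM, hT, hH, hY]
    constructor
    · rintro ⟨⟨h1, h2⟩, h3⟩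
      subst h1; subst h2; exact ⟨⟨rfl, rfl⟩, h3⟩
    · rintro ⟨⟨h1, h2⟩, h3⟩
      subst h1; subst h2; exact ⟨⟨rfl, rfl⟩, h3⟩
  have eY' : {ω | Y' ω = y} = V ⁻¹' {v | fY (fM t v.2.2.1) (h v.1) v.2.2.2 = y} := by
    ext ω; simp [hVdef, hY', hM', hH]
  -- abbreviations
  set Q : AT → AM → ENNReal := fun t' m => ∑ b3, if fM t' b3 = m then pM b3 else 0 with hQdef
  set R : AM → AH → ENNReal :=
    fun m a => ∑ b4, if fY m a b4 = y then pY b4 else 0 with hRdef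
  set ST : AT → ENNReal :=
    fun t' => ∑ b1, ∑ b2, if fT (h b1) b2 = t' then pH b1 * pT b2 else 0 with hSTdef
  set G : AM → AT → ENNReal :=
    fun m t' => ∑ b1, ∑ b2,
      if fT (h b1) b2 = t' then pH b1 * pT b2 * R m (h b1) else 0 with hGdef
  -- inner collapses
  have inner_cT : ∀ (t' : AT) (b1 : BH) (b2 : BT),
      (∑ b3 : BM, ∑ b4 : BY, if fT (h b1) b2 = t' then pH b1 * pT b2 * pM b3 * pY b4 else 0)
        = if fT (h b1) b2 = t' then pH b1 * pT b2 else 0 := by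
    intro t' b1 b2
    rw [Finset.sum_congr rfl fun b3 _ => fd_L3 pY hpY1 (fT (h b1) b2 = t') (pH b1 * pT b2 * pM b3)]
    exact fd_L3 pM hpM1 _ _
  have inner_cMT : ∀ (m : AM) (t' : AT) (b1 : BH) (b2 : BT),
      (∑ b3 : BM, ∑ b4 : BY, if (fT (h b1) b2 = t' ∧ fM t' b3 = m)
          then pH b1 * pT b2 * pM b3 * pY b4 else 0)
        = if fT (h b1) b2 = t' then pH b1 * pT b2 * Q t' m else 0 := by
    intro m t' b1 b2
    rw [Finset.sum_congr rfl fun b3 _ =>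
      fd_L3 pY hpY1 (fT (h b1) b2 = t' ∧ fM t' b3 = m) (pH b1 * pT b2 * pM b3)]
    rw [fd_L4 pM (fT (h b1) b2 = t') (fun b3 => fM t' b3 = m) (pH b1 * pT b2)]
  have inner_cMTY : ∀ (m : AM) (t' : AT) (b1 : BH) (b2 : BT),
      (∑ b3 : BM, ∑ b4 : BY, if ((fT (h b1) b2 = t' ∧ fM t' b3 = m) ∧ fY m (h b1) b4 = y)
          then pH b1 * pT b2 * pM b3 * pY b4 else 0)
        = if fT (h b1) b2 = t' then (pH b1 * pT b2 * Q t' m) * R m (h b1) else 0 := by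
    intro m t' b1 b2
    have h1 : ∀ b3 : BM, (∑ b4 : BY, if ((fT (h b1) b2 = t' ∧ fM t' b3 = m) ∧ fY m (h b1) b4 = y)
        then pH b1 * pT b2 * pM b3 * pY b4 else 0)
        = if (fT (h b1) b2 = t' ∧ fM t' b3 = m)
            then (pH b1 * pT b2 * pM b3) * R m (h b1) else 0 := by
      intro b3
      rw [fd_L4 pY (fT (h b1) b2 = t' ∧ fM t' b3 = m) (fun b4 => fY m (h b1) b4 = y)
        (pH b1 * pT b2 * pM b3)]
    rw [Finset.sum_congr rfl fun b3 _ => h1 b3]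
    rw [fd_L6 pM (fT (h b1) b2 = t') (fun b3 => fM t' b3 = m) (pH b1 * pT b2) (R m (h b1))]
  -- (i)
  have cT : ∀ t' : AT, μ {ω | T ω = t'} = ST t' := by
    intro t'
    rw [eT t', sumS]
    simp only [Set.mem_setOf_eq, hSTdef]
    exact Finset.sum_congr rfl fun b1 _ => Finset.sum_congr rfl fun b2 _ => inner_cT t' b1 b2
  -- (ii)
  have cMT : ∀ (m : AM) (t' : AT), μ {ω | M ω = m ∧ T ω = t'} = ST t' * Q t' m := by
    intro m t'
    rw [eMT m t', sumS]
    trans (∑ b1 : BH, ∑ b2 : BT, ∑ b3 : BM, ∑ b4 : BY,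
        if (fT (h b1) b2 = t' ∧ fM t' b3 = m) then pH b1 * pT b2 * pM b3 * pY b4 else 0)
    · exact Finset.sum_congr rfl fun b1 _ => Finset.sum_congr rfl fun b2 _ =>
        Finset.sum_congr rfl fun b3 _ => Finset.sum_congr rfl fun b4 _ =>
          fd_ite_irrel _ _ rfl _ _
    trans (∑ b1 : BH, ∑ b2 : BT, if fT (h b1) b2 = t' then pH b1 * pT b2 * Q t' m else 0)
    · exact Finset.sum_congr rfl fun b1 _ => Finset.sum_congr rfl fun b2 _ =>
        inner_cMT m t' b1 b2
    · simp only [hSTdef, Finset.sum_mul, ite_mul, zero_mul]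
  -- (iii)
  have cMTY : ∀ (m : AM) (t' : AT),
      μ ({ω | M ω = m ∧ T ω = t'} ∩ {ω | Y ω = y}) = Q t' m * G m t' := by
    intro m t'
    rw [eMTY m t', sumS]
    trans (∑ b1 : BH, ∑ b2 : BT, ∑ b3 : BM, ∑ b4 : BY,
        if ((fT (h b1) b2 = t' ∧ fM t' b3 = m) ∧ fY m (h b1) b4 = y)
          then pH b1 * pT b2 * pM b3 * pY b4 else 0)
    · exact Finset.sum_congr rfl fun b1 _ => Finset.sum_congr rfl fun b2 _ =>
        Finset.sum_congr rfl fun b3 _ => Finset.sum_congr rfl fun b4 _ =>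
          fd_ite_irrel _ _ rfl _ _
    trans (∑ b1 : BH, ∑ b2 : BT,
        if fT (h b1) b2 = t' then (pH b1 * pT b2 * Q t' m) * R m (h b1) else 0)
    · exact Finset.sum_congr rfl fun b1 _ => Finset.sum_congr rfl fun b2 _ =>
        inner_cMTY m t' b1 b2
    · simp only [hGdef, Finset.mul_sum, mul_ite, mul_zero]
      refine Finset.sum_congr rfl fun b1 _ => Finset.sum_congr rfl fun b2 _ => ?_
      by_cases hc : fT (h b1) b2 = t'
      · rw [if_pos hc, if_pos hc]; ring
      · rw [if_neg hc, if_neg hc]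
  -- positivity consequences
  have hTne : ∀ t' : AT, μ {ω | T ω = t'} ≠ 0 := by
    intro t'
    have hΩ : Nonempty Ω := by
      by_contra hne
      rw [not_nonempty_iff] at hne
      have : μ Set.univ = 1 := measure_univ
      rw [Set.univ_eq_empty_iff.mpr hne] at this
      simp at this
    obtain ⟨ω0⟩ := hΩ
    have hsub : {ω | T ω = t' ∧ M ω = M ω0} ⊆ {ω | T ω = t'} := fun ω hω => hω.1
    exact fun h0 => hpos t' (M ω0) (le_antisymm (h0 ▸ measure_mono hsub) zero_le)
  have hTnt : ∀ t' : AT, μ {ω | T ω = t'} ≠ ⊤ := fun t' => measure_ne_top μ _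
  have hMTpos : ∀ (m : AM) (t' : AT), μ {ω | M ω = m ∧ T ω = t'} ≠ 0 := by
    intro m t'
    have : {ω | T ω = t' ∧ M ω = m} = {ω | M ω = m ∧ T ω = t'} := by
      ext ω; exact and_comm
    exact this ▸ hpos t' m
  have hQne : ∀ (m : AM) (t' : AT), Q t' m ≠ 0 := by
    intro m t' h0
    exact hMTpos m t' (by rw [cMT m t', h0, mul_zero])
  have hQnt : ∀ (m : AM) (t' : AT), Q t' m ≠ ⊤ := by
    intro m t'
    have hle : Q t' m ≤ 1 := by
      rw [← hpM1, hQdef]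
      exact Finset.sum_le_sum fun b _ => by split <;> simp
    exact ne_top_of_le_ne_top (by simp) hle
  -- conditional probabilities
  have condT : ∀ m : AM, μ[|{ω | T ω = t}] {ω | M ω = m} = Q t m := by
    intro m
    have hms : MeasurableSet {ω | T ω = t} := eT t ▸ hmeasV _
    rw [cond_apply hms μ _]
    have hint : {ω | T ω = t} ∩ {ω | M ω = m} = {ω | M ω = m ∧ T ω = t} := by
      ext ω; exact and_comm
    rw [hint, cMT m t, cT t]
    rw [← mul_assoc, ENNReal.inv_mul_cancel (cT t ▸ hTne t) (cT t ▸ hTnt t), one_mul]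
  have condY : ∀ (m : AM) (t' : AT),
      μ {ω | T ω = t'} * μ[|{ω | M ω = m ∧ T ω = t'}] {ω | Y ω = y} = G m t' := by
    intro m t'
    have hms : MeasurableSet {ω | M ω = m ∧ T ω = t'} := eMT m t' ▸ hmeasV _
    rw [cond_apply hms μ _, cMTY m t', cMT m t', cT t']
    exact fd_cancel (cT t' ▸ hTne t') (cT t' ▸ hTnt t') (hQne m t') (hQnt m t')
  -- final computation
  simp only [condT, condY]
  -- LHS
  rw [eY', sumS]
  have lhs1 : ∀ (b1 : BH) (b2 : BT) (b3 : BM), (∑ b4 : BY, if fY (fM t b3) (h b1) b4 = y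
      then pH b1 * pT b2 * pM b3 * pY b4 else 0)
      = (pH b1 * pT b2 * pM b3) * R (fM t b3) (h b1) := by
    intro b1 b2 b3
    rw [fd_L1 pY _ _]
  simp only [Set.mem_setOf_eq, lhs1]
  have sumG : ∀ m : AM, (∑ t' : AT, G m t')
      = ∑ b1 : BH, ∑ b2 : BT, pH b1 * pT b2 * R m (h b1) := by
    intro m
    calc ∑ t' : AT, G m t'
        = ∑ t' : AT, ∑ b1 : BH, ∑ b2 : BT,
            if fT (h b1) b2 = t' then pH b1 * pT b2 * R m (h b1) else 0 := by
          simp only [hGdef]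
      _ = ∑ b1 : BH, ∑ t' : AT, ∑ b2 : BT,
            if fT (h b1) b2 = t' then pH b1 * pT b2 * R m (h b1) else 0 := Finset.sum_comm
      _ = ∑ b1 : BH, ∑ b2 : BT, ∑ t' : AT,
            if fT (h b1) b2 = t' then pH b1 * pT b2 * R m (h b1) else 0 :=
          Finset.sum_congr rfl fun b1 _ => Finset.sum_comm
      _ = ∑ b1 : BH, ∑ b2 : BT, pH b1 * pT b2 * R m (h b1) :=
          Finset.sum_congr rfl fun b1 _ => Finset.sum_congr rfl fun b2 _ =>
            (Finset.sum_ite_eq Finset.univ (fT (h b1) b2) _).trans (by simp)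
  simp only [sumG]
  symm
  calc ∑ m : AM, Q t m * ∑ b1 : BH, ∑ b2 : BT, pH b1 * pT b2 * R m (h b1)
      = ∑ m : AM, ∑ b3 : BM, if fM t b3 = m
          then pM b3 * ∑ b1 : BH, ∑ b2 : BT, pH b1 * pT b2 * R m (h b1) else 0 :=
        Finset.sum_congr rfl fun m _ => by
          simp only [hQdef, Finset.sum_mul, ite_mul, zero_mul]
    _ = ∑ b3 : BM, ∑ m : AM, if fM t b3 = m
          then pM b3 * ∑ b1 : BH, ∑ b2 : BT, pH b1 * pT b2 * R m (h b1) else 0 :=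
        Finset.sum_comm
    _ = ∑ b3 : BM, pM b3 * ∑ b1 : BH, ∑ b2 : BT, pH b1 * pT b2 * R (fM t b3) (h b1) :=
        Finset.sum_congr rfl fun b3 _ =>
          (Finset.sum_ite_eq Finset.univ (fM t b3) _).trans (by simp)
    _ = ∑ b3 : BM, ∑ b1 : BH, ∑ b2 : BT, pM b3 * (pH b1 * pT b2 * R (fM t b3) (h b1)) := by
        simp only [Finset.mul_sum]
    _ = ∑ b1 : BH, ∑ b3 : BM, ∑ b2 : BT, pM b3 * (pH b1 * pT b2 * R (fM t b3) (h b1)) :=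
        Finset.sum_comm
    _ = ∑ b1 : BH, ∑ b2 : BT, ∑ b3 : BM, pM b3 * (pH b1 * pT b2 * R (fM t b3) (h b1)) :=
        Finset.sum_congr rfl fun b1 _ => Finset.sum_comm
    _ = ∑ b1 : BH, ∑ b2 : BT, ∑ b3 : BM, (pH b1 * pT b2 * pM b3) * R (fM t b3) (h b1) :=
        Finset.sum_congr rfl fun b1 _ => Finset.sum_congr rfl fun b2 _ =>
          Finset.sum_congr rfl fun b3 _ => by ring
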